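/- Let n ≥ 2 and let s ∈ {-1,1}^n. The n-dimensional Lebesgue volume of the peak peak_s = conv(F_s ∪ {s/(n-1)}) equals 1/((n-1)·n!). In particular, vol(peak_s) = vol(O_n)/(2^n (n-1)). -/

import Mathlib

open MeasureTheory Set ENNReal

open Pointwise

section Helpers

def corner (n : ℕ) (r : ℝ) : Set (Fin n → ℝ) :=
  {y | (∀ i, 0 ≤ y i) ∧ ∑ i, y i ≤ r}

lemma measurableSet_corner (n : ℕ) (r : ℝ) : MeasurableSet (corner n r) := by
  have h1 : MeasurableSet {y : Fin n → ℝ | ∀ i, 0 ≤ y i} := by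
    rw [Set.setOf_forall]
    exact MeasurableSet.iInter fun i =>
      measurableSet_le measurable_const (measurable_pi_apply i)
  have h2 : MeasurableSet {y : Fin n → ℝ | ∑ i, y i ≤ r} :=
    measurableSet_le (Finset.measurable_sum _ fun i _ => measurable_pi_apply i)
      measurable_const
  exact h1.inter h2

lemma volume_corner : ∀ (n : ℕ) (r : ℝ), 0 ≤ r →
    volume (corner n r) = ENNReal.ofReal (r ^ n / n.factorial) := by
  intro n
  induction n with
  | zero =>
    intro r hr
    have : corner 0 r = univ := by
      ext y; simp [corner, hr]
    rw [this, show (univ : Set (Fin 0 → ℝ)) = Set.univ.pi (fun _ => (Set.univ : Set ℝ)) by simp,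
      volume_pi_pi]
    simp
  | succ n ih =>
    intro r hr
    set T : Set (ℝ × (Fin n → ℝ)) :=
      {p | 0 ≤ p.1 ∧ (∀ i, 0 ≤ p.2 i) ∧ p.1 + ∑ i, p.2 i ≤ r} with hT
    have hTm : MeasurableSet T := by
      have h1 : MeasurableSet {p : ℝ × (Fin n → ℝ) | 0 ≤ p.1} :=
        measurableSet_le measurable_const measurable_fst
      have h2 : MeasurableSet {p : ℝ × (Fin n → ℝ) | ∀ i, 0 ≤ p.2 i} := by
        rw [Set.setOf_forall]
        exact MeasurableSet.iInter fun i =>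
          measurableSet_le measurable_const (measurable_snd.eval)
      have h3 : MeasurableSet {p : ℝ × (Fin n → ℝ) | p.1 + ∑ i, p.2 i ≤ r} :=
        measurableSet_le (measurable_fst.add
          (Finset.measurable_sum _ fun i _ => measurable_snd.eval))
          measurable_const
      exact h1.inter (h2.inter h3)
    have hpre : corner (n+1) r =
        (MeasurableEquiv.piFinSuccAbove (fun _ : Fin (n+1) => ℝ) 0) ⁻¹' T := by
      ext x
      simp only [corner, mem_setOf_eq, mem_preimage, MeasurableEquiv.piFinSuccAbove_apply,
        hT, Fin.insertNthEquiv, Fin.succAbove_zero, Fin.forall_fin_succ, Fin.sum_univ_succ]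
      tauto
    have hmp := volume_preserving_piFinSuccAbove (fun _ : Fin (n + 1) => ℝ) 0
    rw [hpre, hmp.measure_preimage hTm.nullMeasurableSet,
      MeasureTheory.Measure.volume_eq_prod, Measure.prod_apply hTm]
    have hsec : ∀ t : ℝ, volume (Prod.mk t ⁻¹' T) =
        Set.indicator (Icc 0 r) (fun t => ENNReal.ofReal ((r - t)^n / n.factorial)) t := by
      intro t
      by_cases ht : t ∈ Icc 0 r
      · have hset : Prod.mk t ⁻¹' T = corner n (r - t) := by
          ext z
          simp only [mem_preimage, hT, mem_setOf_eq, corner, ht.1, true_and]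
          constructor
          · rintro ⟨h2, h3⟩; exact ⟨h2, by linarith⟩
          · rintro ⟨h2, h3⟩; exact ⟨h2, by linarith⟩
        rw [hset, ih _ (by linarith [ht.2]), Set.indicator_of_mem ht]
      · rw [Set.mem_Icc, not_and_or] at ht
        push_neg at ht
        have hset : Prod.mk t ⁻¹' T = ∅ := by
          ext z
          simp only [mem_preimage, mem_empty_iff_false, iff_false, hT, mem_setOf_eq]
          rintro ⟨h1, h2, h3⟩
          have hz : 0 ≤ ∑ i, z i := Finset.sum_nonneg fun i _ => h2 i
          rcases ht with h | h <;> linarith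
        rw [hset, measure_empty, Set.indicator_of_notMem (by rw [Set.mem_Icc, not_and_or]; push_neg; exact ht)]
    rw [lintegral_congr hsec, lintegral_indicator measurableSet_Icc _]
    have hcont : Continuous fun t : ℝ => (r - t)^n / n.factorial :=
      ((continuous_const.sub continuous_id).pow n).div_const _
    rw [← MeasureTheory.ofReal_integral_eq_lintegral_ofReal
      (hcont.integrableOn_Icc)
      ((ae_restrict_iff' measurableSet_Icc).2 (Filter.Eventually.of_forall fun t ht =>
        div_nonneg (pow_nonneg (by linarith [ht.2]) n) (by positivity)))]
    congr 1
    rw [MeasureTheory.integral_Icc_eq_integral_Ioc, ← intervalIntegral.integral_of_le hr,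
      intervalIntegral.integral_div]
    rw [intervalIntegral.integral_comp_sub_left (fun x => x ^ n) r]
    rw [sub_self, sub_zero, integral_pow, zero_pow (Nat.succ_ne_zero n), sub_zero]
    rw [Nat.factorial_succ]
    push_cast
    field_simp

lemma convex_corner (n : ℕ) (r : ℝ) : Convex ℝ (corner n r) := by
  rintro x ⟨hx1, hx2⟩ y ⟨hy1, hy2⟩ a b ha hb hab
  refine ⟨fun i => add_nonneg (mul_nonneg ha (hx1 i)) (mul_nonneg hb (hy1 i)), ?_⟩
  have : ∑ i, (a • x + b • y) i = a * ∑ i, x i + b * ∑ i, y i := by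
    simp [Finset.sum_add_distrib, Finset.mul_sum]
  rw [this]
  calc a * ∑ i, x i + b * ∑ i, y i ≤ a * r + b * r := by
        gcongr
    _ = r := by rw [← add_mul, hab, one_mul]

lemma corner_eq_convexHull (n : ℕ) :
    corner n 1 = convexHull ℝ ({0} ∪ Set.range fun i : Fin n => Pi.single i (1 : ℝ)) := by
  apply Subset.antisymm
  · rintro y ⟨hy1, hy2⟩
    have hmem := Finset.centerMass_mem_convexHull
      (s := {0} ∪ Set.range fun i : Fin n => Pi.single i (1 : ℝ))
      (Finset.univ : Finset (Option (Fin n)))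
      (w := fun o => o.elim (1 - ∑ i, y i) fun i => y i)
      (z := fun o => o.elim 0 fun i => Pi.single i (1 : ℝ))
      (fun o _ => by cases o with
        | none => simpa using hy2
        | some i => exact hy1 i)
      (by
        rw [Fintype.sum_option]
        simp)
      (fun o _ => by cases o with
        | none => exact mem_union_left _ rfl
        | some i => exact mem_union_right _ ⟨i, rfl⟩)
    have hcm : (Finset.univ : Finset (Option (Fin n))).centerMass
        (fun o => o.elim (1 - ∑ i, y i) fun i => y i)
        (fun o => o.elim 0 fun i => Pi.single i (1 : ℝ)) = y := by
      rw [Finset.centerMass]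
      rw [show ∑ o : Option (Fin n), (o.elim (1 - ∑ i, y i) fun i => y i) = 1 by
        rw [Fintype.sum_option]; simp]
      rw [inv_one, one_smul, Fintype.sum_option]
      simp only [Option.elim_none, Option.elim_some, smul_zero, zero_add]
      ext j
      simp [Finset.sum_apply, Pi.single_apply, mul_ite]
    rwa [hcm] at hmem
  · apply convexHull_min _ (convex_corner n 1)
    rintro x (rfl | ⟨i, rfl⟩)
    · exact ⟨fun i => le_refl 0, by simp⟩
    · refine ⟨fun j => by by_cases h : j = i <;> simp [Pi.single_apply, h], ?_⟩
      simp [Pi.single_apply]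

lemma vol_affine_image (n : ℕ) (f : (Fin n → ℝ) →ₗ[ℝ] (Fin n → ℝ)) (c : Fin n → ℝ)
    (A : Set (Fin n → ℝ)) :
    volume ((fun y => c + f y) '' A) = ENNReal.ofReal |LinearMap.det f| * volume A := by
  have h1 : (fun y => c + f y) '' A = c +ᵥ (f '' A) := by
    rw [← Set.image_vadd, Set.image_image]
    simp [vadd_eq_add]
  rw [h1, measure_vadd, Measure.addHaar_image_linearMap]

lemma null_hyperplane (n : ℕ) (i : Fin n) : volume {x : Fin n → ℝ | x i = 0} = 0 := by
  have h : {x : Fin n → ℝ | x i = 0} =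
      Set.univ.pi (fun j => if j = i then ({0} : Set ℝ) else univ) := by
    ext x
    simp only [mem_setOf_eq, Set.mem_pi, mem_univ, forall_true_left]
    constructor
    · intro hx j; by_cases h : j = i <;> simp [h, hx]
    · intro hx; have := hx i; simpa using this
  rw [h, volume_pi_pi]
  exact Finset.prod_eq_zero (Finset.mem_univ i) (by simp)

end Helpers

/-- The cross polytope `O_n`: the convex hull of `{±e_i : i ∈ [n]}`. -/
noncomputable def crossPolytope (n : ℕ) : Set (Fin n → ℝ) :=
  convexHull ℝ ((Set.range fun i : Fin n => Pi.single i (1 : ℝ)) ∪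
    (Set.range fun i : Fin n => Pi.single i (-1 : ℝ)))

/-- The peak attached to the facet `F_s = conv{s_i e_i}`, namely
`conv(F_s ∪ {s/(n-1)})`. -/
noncomputable def peak (n : ℕ) (s : Fin n → ℝ) : Set (Fin n → ℝ) :=
  convexHull ℝ ((Set.range fun i : Fin n => Pi.single i (s i)) ∪ {((n : ℝ) - 1)⁻¹ • s})

theorem volume_peak (n : ℕ) (hn : 2 ≤ n) (s : Fin n → ℝ)
    (hs : ∀ i, s i = 1 ∨ s i = -1) :
    volume (peak n s) = ENNReal.ofReal (1 / (((n : ℝ) - 1) * n.factorial)) ∧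
    volume (peak n s) = volume (crossPolytope n) / (2 ^ n * ((n : ℝ≥0∞) - 1)) := by
  have hn2 : (2:ℝ) ≤ (n:ℝ) := by exact_mod_cast hn
  have hn1 : (0:ℝ) < (n:ℝ) - 1 := by linarith
  have hfac : (0:ℝ) < (n.factorial : ℝ) := by exact_mod_cast n.factorial_pos
  set a : ℝ := ((n:ℝ) - 1)⁻¹ with ha
  have ha0 : 0 < a := inv_pos.2 hn1
  -- the affine map sending the corner simplex to the peak
  set M : Matrix (Fin n) (Fin n) ℝ :=
    Matrix.of fun i j => s i * ((if i = j then (1:ℝ) else 0) - a) with hM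
  have habs : ∀ i, |s i| = 1 := fun i => by rcases hs i with h | h <;> simp [h]
  have hdet : |LinearMap.det (Matrix.toLin' M)| = a := by
    rw [LinearMap.det_toLin']
    have hfacM : M = Matrix.diagonal s *
        (1 + Matrix.replicateCol Unit (fun _ => -a) * Matrix.replicateRow Unit (fun _ => (1:ℝ))) := by
      ext i j
      rw [Matrix.diagonal_mul]
      simp only [Matrix.add_apply, Matrix.one_apply, Matrix.mul_apply, Matrix.replicateCol_apply,
        Matrix.replicateRow_apply, Finset.univ_unique, Finset.sum_singleton, hM, Matrix.of_apply]
      by_cases h : i = j <;> simp [h, sub_eq_add_neg]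
    rw [hfacM, Matrix.det_mul, Matrix.det_diagonal, Matrix.det_one_add_replicateCol_mul_replicateRow]
    have hdot : dotProduct (fun _ : Fin n => (1:ℝ)) (fun _ : Fin n => -a)
        = -((n:ℝ) * a) := by
      simp [dotProduct, Finset.sum_const, mul_comm]
    rw [hdot, abs_mul]
    have h1 : |∏ i, s i| = 1 := by rw [Finset.abs_prod]; simp [habs]
    have h2 : 1 + -((n:ℝ) * a) = -a := by
      rw [ha]; field_simp; ring
    rw [h1, h2, one_mul, abs_neg, abs_of_pos ha0]
  have himg : peak n s = (fun y => (a • s) + Matrix.toLin' M y) '' (corner n 1) := by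
    set T : (Fin n → ℝ) →ᵃ[ℝ] (Fin n → ℝ) :=
      { toFun := fun y => (a • s) + Matrix.toLin' M y
        linear := Matrix.toLin' M
        map_vadd' := by intro p v; simp [map_add]; abel }
    have hTapp : ∀ y, T y = (a • s) + Matrix.toLin' M y := fun _ => rfl
    have hcomp : (⇑T ∘ fun i : Fin n => Pi.single i (1:ℝ)) =
        fun i : Fin n => Pi.single i (s i) := by
      funext i
      rw [Function.comp_apply, hTapp, Matrix.toLin'_apply, Matrix.mulVec_single]
      ext j
      simp only [Pi.add_apply, Pi.smul_apply, smul_eq_mul, hM, Matrix.of_apply,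
        Pi.single_apply]
      by_cases h : j = i <;> simp [h] <;> ring
    have hTgen : ⇑T '' ({0} ∪ Set.range fun i : Fin n => Pi.single i (1:ℝ)) =
        (Set.range fun i : Fin n => Pi.single i (s i)) ∪ {((n : ℝ) - 1)⁻¹ • s} := by
      rw [Set.image_union, Set.image_singleton, ← Set.range_comp, hcomp]
      rw [show T 0 = ((n : ℝ) - 1)⁻¹ • s by rw [hTapp, map_zero, add_zero, ha]]
      exact Set.union_comm _ _
    rw [corner_eq_convexHull]
    rw [show (fun y => (a • s) + Matrix.toLin' M y) = ⇑T from rfl,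
      AffineMap.image_convexHull, hTgen]
    rfl
  have hvol1 : volume (peak n s) = ENNReal.ofReal (1 / (((n:ℝ) - 1) * n.factorial)) := by
    rw [himg, vol_affine_image, hdet, volume_corner n 1 zero_le_one, one_pow,
      ← ENNReal.ofReal_mul ha0.le]
    congr 1
    rw [ha]
    field_simp
  refine ⟨hvol1, ?_⟩
  -- cross polytope volume
  set sg : (Fin n → Bool) → (Fin n → ℝ) := fun b i => if b i then 1 else -1 with hsg
  set A : (Fin n → Bool) → Set (Fin n → ℝ) :=
    fun b => convexHull ℝ ({0} ∪ Set.range fun i : Fin n => Pi.single i (sg b i)) with hA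
  have hsgabs : ∀ b i, |sg b i| = 1 := fun b i => by by_cases h : b i <;> simp [hsg, h]
  have hsgsq : ∀ b i, sg b i * sg b i = 1 := fun b i => by by_cases h : b i <;> simp [hsg, h]
  have hAimg : ∀ b, A b = (Matrix.toLin' (Matrix.diagonal (sg b))) '' corner n 1 := by
    intro b
    have hcomp : (⇑(Matrix.toLin' (Matrix.diagonal (sg b))) ∘ fun i : Fin n => Pi.single i (1:ℝ))
        = fun i : Fin n => Pi.single i (sg b i) := by
      funext i
      rw [Function.comp_apply, Matrix.toLin'_apply, Matrix.mulVec_single]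
      ext j
      simp only [Matrix.diagonal_apply, Pi.single_apply]
      by_cases h : j = i <;> simp [h]
    rw [corner_eq_convexHull, LinearMap.image_convexHull, Set.image_union,
      Set.image_singleton, map_zero, ← Set.range_comp, hcomp]
  have hAvol : ∀ b, volume (A b) = ENNReal.ofReal (1 / n.factorial) := by
    intro b
    rw [hAimg b, Measure.addHaar_image_linearMap, LinearMap.det_toLin',
      Matrix.det_diagonal, volume_corner n 1 zero_le_one, one_pow]
    have : |∏ i, sg b i| = 1 := by rw [Finset.abs_prod]; simp [hsgabs]
    rw [this, ENNReal.ofReal_one, one_mul]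
  have hsgn : ∀ b x, x ∈ A b → ∀ i, 0 ≤ sg b i * x i := by
    intro b x hx i
    rw [hAimg b] at hx
    rcases hx with ⟨y, hy, rfl⟩
    have hval : (Matrix.toLin' (Matrix.diagonal (sg b)) y) i = sg b i * y i := by
      rw [Matrix.toLin'_apply, Matrix.mulVec_diagonal]
    rw [hval, ← mul_assoc, hsgsq, one_mul]
    exact hy.1 i
  have hsub1 : ∀ b, A b ⊆ crossPolytope n := by
    intro b
    rw [hA]
    apply convexHull_min _ (convex_convexHull ℝ _)
    rintro x (rfl | ⟨i, rfl⟩)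
    · -- 0 ∈ crossPolytope
      have i0 : Fin n := ⟨0, by omega⟩
      have h1 : Pi.single i0 (1:ℝ) ∈ crossPolytope n :=
        subset_convexHull ℝ _ (mem_union_left _ ⟨i0, rfl⟩)
      have h2 : Pi.single i0 (-1:ℝ) ∈ crossPolytope n :=
        subset_convexHull ℝ _ (mem_union_right _ ⟨i0, rfl⟩)
      have := (convex_convexHull ℝ _) h1 h2 (by norm_num : (0:ℝ) ≤ 1/2)
        (by norm_num : (0:ℝ) ≤ 1/2) (by norm_num)
      convert this using 1
      ext j
      simp [Pi.single_apply]
      by_cases h : j = i0 <;> simp [h]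
    · show Pi.single i (sg b i) ∈ crossPolytope n
      rcases (by by_cases h : b i <;> simp [hsg, h] : sg b i = 1 ∨ sg b i = -1) with h | h
      · rw [h]; exact subset_convexHull ℝ _ (mem_union_left _ ⟨i, rfl⟩)
      · rw [h]; exact subset_convexHull ℝ _ (mem_union_right _ ⟨i, rfl⟩)
  have hsub2 : crossPolytope n ⊆ {x | ∑ i, |x i| ≤ 1} := by
    apply convexHull_min
    · rintro x (⟨i, rfl⟩ | ⟨i, rfl⟩) <;>
      · simp only [mem_setOf_eq, Pi.single_apply]
        rw [show ∀ c : ℝ, (∑ j, |if j = i then c else 0|) = |c| from fun c => by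
          rw [Finset.sum_eq_single i (by intro j _ hj; simp [hj]) (by simp)]; simp]
        norm_num
    · intro x hx y hy p q hp hq hpq
      simp only [mem_setOf_eq] at *
      calc ∑ i, |(p • x + q • y) i| ≤ ∑ i, (p * |x i| + q * |y i|) := by
            apply Finset.sum_le_sum
            intro i _
            simp only [Pi.add_apply, Pi.smul_apply, smul_eq_mul]
            calc |p * x i + q * y i| ≤ |p * x i| + |q * y i| := abs_add_le _ _
              _ = p * |x i| + q * |y i| := by
                  rw [abs_mul, abs_mul, abs_of_nonneg hp, abs_of_nonneg hq]
        _ = p * ∑ i, |x i| + q * ∑ i, |y i| := by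
            rw [Finset.sum_add_distrib, Finset.mul_sum, Finset.mul_sum]
        _ ≤ p * 1 + q * 1 := by gcongr
        _ = 1 := by rw [mul_one, mul_one, hpq]
  have hsub3 : {x : Fin n → ℝ | ∑ i, |x i| ≤ 1} ⊆ ⋃ b, A b := by
    intro x hx
    simp only [mem_setOf_eq] at hx
    set b : Fin n → Bool := fun i => decide (0 ≤ x i) with hb
    refine mem_iUnion.2 ⟨b, ?_⟩
    rw [hAimg b]
    refine ⟨fun i => |x i|, ⟨fun i => abs_nonneg _, hx⟩, ?_⟩
    ext i
    rw [Matrix.toLin'_apply, Matrix.mulVec_diagonal]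
    by_cases h : 0 ≤ x i
    · simp [hsg, hb, h, abs_of_nonneg h]
    · simp [hsg, hb, h, abs_of_neg (lt_of_not_ge h)]
  have hcover : crossPolytope n = ⋃ b, A b :=
    Subset.antisymm (hsub2.trans hsub3) (iUnion_subset hsub1)
  have hdisj : Pairwise (Function.onFun (AEDisjoint volume) A) := by
    intro b b' hne
    obtain ⟨i, hi⟩ : ∃ i, b i ≠ b' i := by
      by_contra h
      push_neg at h
      exact hne (funext h)
    refine measure_mono_null ?_ (null_hyperplane n i)
    · rintro x ⟨h1, h2⟩
      have p1 := hsgn b x h1 i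
      have p2 := hsgn b' x h2 i
      have hopp : sg b' i = -sg b i := by
        rcases Bool.eq_false_or_eq_true (b i) with h | h <;>
          rcases Bool.eq_false_or_eq_true (b' i) with h' | h' <;>
          simp [hsg, h, h'] at hi ⊢ <;> simp [h, h'] at hi
      rw [hopp] at p2
      have hx0 : sg b i * x i = 0 := le_antisymm (by linarith) p1
      have hne0 : sg b i ≠ 0 := by
        have := hsgabs b i
        intro h0
        rw [h0, abs_zero] at this
        norm_num at this
      simp only [mem_setOf_eq]
      exact (mul_eq_zero.1 hx0).resolve_left hne0
  have hcvol : volume (crossPolytope n) = ENNReal.ofReal (2^n / n.factorial) := by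
    rw [hcover, measure_iUnion₀ hdisj (fun b => (convex_convexHull ℝ _).nullMeasurableSet volume)]
    rw [tsum_fintype]
    simp only [hAvol]
    rw [Finset.sum_const, Finset.card_univ]
    have hcard : Fintype.card (Fin n → Bool) = 2 ^ n := by
      simp [Fintype.card_fun]
    rw [hcard, nsmul_eq_mul]
    rw [show ((2^n : ℕ) : ℝ≥0∞) = ENNReal.ofReal ((2:ℝ)^n) by
      rw [← ENNReal.ofReal_natCast]; norm_num]
    rw [← ENNReal.ofReal_mul (by positivity)]
    congr 1
    ring
  rw [hvol1, hcvol]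
  have hsubcast : ((n : ℝ≥0∞) - 1) = ENNReal.ofReal ((n:ℝ) - 1) := by
    rw [ENNReal.ofReal_sub _ zero_le_one]
    simp [ENNReal.ofReal_natCast]
  rw [hsubcast]
  rw [show ((2:ℝ≥0∞)^n) = ENNReal.ofReal ((2:ℝ)^n) by
    rw [ENNReal.ofReal_pow (by norm_num)]; norm_num]
  rw [← ENNReal.ofReal_mul (by positivity)]
  rw [← ENNReal.ofReal_div_of_pos (by positivity)]
  congr 1
  field_simp
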